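/- Let X be a metric space, K ⊂ X, let 0 < α < β ≤ 1 and κ ≥ 0. Suppose (f_n) is a sequence of real-valued functions on K such that for all n, the β-Hölder seminorm of f_n is at most 2^{-n(α-β)} κ and the sup norm of f_n is at most 2^{-nα} κ. Then the series Σ_{n=0}^∞ f_n converges uniformly on K to an α-Hölder continuous function f with α-Hölder seminorm at most C κ, where C depends only on α and β. -/

import Mathlib

open Filter

private lemma half_pow_eq6 (N : ℕ) : ((1/2 : ℝ)) ^ N = (2:ℝ) ^ (-(N:ℝ)) := by
  rw [Real.rpow_neg (by norm_num), Real.rpow_natCast, one_div, inv_pow]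

private lemma exists_scale6 {d : ℝ} (hd0 : 0 < d) (hd1 : d < 1) :
    ∃ N : ℕ, (2:ℝ) ^ (-(N:ℝ)) ≤ d ∧ d ≤ 2 * (2:ℝ) ^ (-(N:ℝ)) := by
  obtain ⟨n, hn⟩ := exists_pow_lt_of_lt_one hd0 (by norm_num : (1/2:ℝ) < 1)
  have hex : ∃ m, (1/2:ℝ) ^ m < d := ⟨n, hn⟩
  classical
  set N := Nat.find hex with hN
  have hNspec : (1/2:ℝ) ^ N < d := Nat.find_spec hex
  have hN0 : N ≠ 0 := by
    intro h
    rw [h] at hNspec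
    norm_num at hNspec; linarith
  obtain ⟨M, hM⟩ := Nat.exists_eq_succ_of_ne_zero hN0
  have hmin : ¬ ((1/2:ℝ) ^ M < d) := Nat.find_min hex (by omega)
  push_neg at hmin
  refine ⟨N, ?_, ?_⟩
  · rw [← half_pow_eq6]; exact hNspec.le
  · rw [← half_pow_eq6]
    calc d ≤ (1/2:ℝ)^M := hmin
    _ = 2 * (1/2:ℝ)^N := by rw [hM, pow_succ]; ring

set_option maxHeartbeats 1000000 in
/-- Littlewood–Paley type lemma, `m = 0` case: a series of functions with sup norms
`≲ 2^{-nα} κ` and `β`-Hölder seminorms `≲ 2^{-n(α-β)} κ` converges uniformly to an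
`α`-Hölder function with seminorm at most `C(α,β) κ`. -/
theorem stmt6 (α β : ℝ) (hα : 0 < α) (hαβ : α < β) (hβ : β ≤ 1) :
    ∃ C > (0 : ℝ), ∀ (X : Type) [inst : MetricSpace X] (K : Set X) (κ : ℝ), 0 ≤ κ →
      ∀ f : ℕ → K → ℝ,
      (∀ (n : ℕ) (x y : K), |f n x - f n y| ≤ 2 ^ (-(n : ℝ) * (α - β)) * κ * dist x y ^ β) →
      (∀ (n : ℕ) (x : K), |f n x| ≤ 2 ^ (-(n : ℝ) * α) * κ) →
      ∃ g : K → ℝ,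
        TendstoUniformly (fun N x => ∑ n ∈ Finset.range N, f n x) g atTop ∧
        ∀ x y : K, |g x - g y| ≤ C * κ * dist x y ^ α := by
  set r := (2:ℝ) ^ (-α) with hr
  set s := (2:ℝ) ^ (β - α) with hs
  have hr0 : 0 < r := Real.rpow_pos_of_pos two_pos _
  have hr1 : r < 1 := Real.rpow_lt_one_of_one_lt_of_neg one_lt_two (by linarith)
  have hs1 : 1 < s := by
    rw [hs]
    exact Real.one_lt_rpow_iff_of_pos two_pos |>.2 (Or.inl ⟨one_lt_two, by linarith⟩)
  refine ⟨s/(s-1) + 2/(1-r),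
    add_pos (div_pos (by linarith) (by linarith)) (div_pos two_pos (by linarith)), ?_⟩
  intro X _ K κ hκ f hHol hSup
  have hrn : ∀ n : ℕ, (2:ℝ) ^ (-(n : ℝ) * α) = r ^ n := by
    intro n
    rw [hr, ← Real.rpow_natCast ((2:ℝ) ^ (-α)) n, ← Real.rpow_mul (by norm_num)]
    ring_nf
  have hsn : ∀ n : ℕ, (2:ℝ) ^ (-(n : ℝ) * (α - β)) = s ^ n := by
    intro n
    rw [hs, ← Real.rpow_natCast ((2:ℝ) ^ (β - α)) n, ← Real.rpow_mul (by norm_num)]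
    ring_nf
  have hsum : Summable (fun n : ℕ => r ^ n * κ) :=
    (summable_geometric_of_lt_one hr0.le hr1).mul_right κ
  have hbnd : ∀ (n : ℕ) (x : K), ‖f n x‖ ≤ r ^ n * κ := by
    intro n x
    rw [Real.norm_eq_abs]
    have := hSup n x; rwa [hrn n] at this
  have hsumf : ∀ x : K, Summable (fun n => f n x) :=
    fun x => Summable.of_norm_bounded hsum (fun n => hbnd n x)
  refine ⟨fun x => ∑' n, f n x, tendstoUniformly_tsum_nat hsum (fun n x => hbnd n x), ?_⟩
  intro x y
  set d := dist x y with hd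
  have hd0 : 0 ≤ d := dist_nonneg
  rcases eq_or_lt_of_le hd0 with hdz | hdpos
  · -- d = 0, so x = y
    have hxy : x = y := dist_eq_zero.mp hdz.symm
    subst hxy
    rw [sub_self, abs_zero, ← hdz, Real.zero_rpow hα.ne', mul_zero]
  -- d > 0
  have tsub : (∑' n, f n x) - (∑' n, f n y) = ∑' n, (f n x - f n y) :=
    (Summable.tsum_sub (hsumf x) (hsumf y)).symm
  have hsumd : Summable (fun n => f n x - f n y) := (hsumf x).sub (hsumf y)
  have habs : Summable (fun n => |f n x - f n y|) := hsumd.abs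
  have hnorm : Summable (fun n => ‖f n x - f n y‖) := by
    simpa only [Real.norm_eq_abs] using habs
  have step1 : |(∑' n, f n x) - (∑' n, f n y)| ≤ ∑' n, |f n x - f n y| := by
    rw [tsub]
    calc |∑' n, (f n x - f n y)| = ‖∑' n, (f n x - f n y)‖ := (Real.norm_eq_abs _).symm
      _ ≤ ∑' n, ‖f n x - f n y‖ := norm_tsum_le_tsum_norm hnorm
      _ = ∑' n, |f n x - f n y| := by simp only [Real.norm_eq_abs]
  have hHol' : ∀ n, |f n x - f n y| ≤ s ^ n * (κ * d ^ β) := by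
    intro n
    have := hHol n x y
    rw [hsn n] at this
    calc |f n x - f n y| ≤ s ^ n * κ * d ^ β := this
      _ = s ^ n * (κ * d ^ β) := by ring
  have hSup' : ∀ n, |f n x - f n y| ≤ 2 * (r ^ n * κ) := by
    intro n
    calc |f n x - f n y| ≤ |f n x| + |f n y| := abs_sub _ _
      _ ≤ r ^ n * κ + r ^ n * κ := by
          have h1 := hSup n x; have h2 := hSup n y
          rw [hrn n] at h1 h2; linarith
      _ = 2 * (r ^ n * κ) := by ring
  have hdα : 0 < d ^ α := Real.rpow_pos_of_pos hdpos _
  -- tail sums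
  have tailsum : ∀ N : ℕ, ∑' i, 2 * (r ^ (i + N) * κ) = 2 * κ * r ^ N * (1 - r)⁻¹ := by
    intro N
    have : ∀ i : ℕ, 2 * (r ^ (i + N) * κ) = (2 * κ * r ^ N) * r ^ i := by
      intro i; rw [pow_add]; ring
    simp_rw [this]
    rw [tsum_mul_left, tsum_geometric_of_lt_one hr0.le hr1]
  rcases lt_or_ge d 1 with hd1 | hd1
  · -- case d < 1: split at N
    obtain ⟨N, hNd, hdN⟩ := exists_scale6 hdpos hd1
    have split : ∑' n, |f n x - f n y| =
        ∑ i ∈ Finset.range N, |f i x - f i y| + ∑' i, |f (i + N) x - f (i + N) y| :=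
      (Summable.sum_add_tsum_nat_add N habs).symm
    have h2N : (0:ℝ) < (2:ℝ) ^ (-(N:ℝ)) := Real.rpow_pos_of_pos two_pos _
    -- part 1
    have hsN : (s:ℝ) ^ N ≤ s * (d ^ α / d ^ β) := by
      have h2Nle : (2:ℝ) ^ (N:ℝ) ≤ 2 / d := by
        rw [le_div_iff₀ hdpos]
        calc (2:ℝ) ^ (N:ℝ) * d ≤ (2:ℝ) ^ (N:ℝ) * (2 * (2:ℝ) ^ (-(N:ℝ))) := by
              apply mul_le_mul_of_nonneg_left hdN (Real.rpow_nonneg (by norm_num) _)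
          _ = 2 := by
              rw [show (2:ℝ) ^ (N:ℝ) * (2 * (2:ℝ) ^ (-(N:ℝ))) =
                  2 * ((2:ℝ) ^ (N:ℝ) * (2:ℝ) ^ (-(N:ℝ))) from by ring,
                ← Real.rpow_add two_pos]
              simp
      have hsNeq : (s:ℝ) ^ N = ((2:ℝ) ^ (N:ℝ)) ^ (β - α) := by
        rw [hs, ← Real.rpow_natCast ((2:ℝ) ^ (β-α)) N, ← Real.rpow_mul (by norm_num),
          ← Real.rpow_mul (by norm_num)]
        ring_nf
      rw [hsNeq]
      calc ((2:ℝ) ^ (N:ℝ)) ^ (β - α) ≤ (2 / d) ^ (β - α) := by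
            apply Real.rpow_le_rpow (Real.rpow_nonneg (by norm_num) _) h2Nle (by linarith)
        _ = s * (d ^ α / d ^ β) := by
            rw [hs, Real.div_rpow (by norm_num) hd0, ← Real.rpow_sub hdpos,
              show α - β = -(β - α) from by ring, Real.rpow_neg hd0, div_eq_mul_inv]
    have part1 : ∑ i ∈ Finset.range N, |f i x - f i y| ≤ s/(s-1) * κ * d ^ α := by
      calc ∑ i ∈ Finset.range N, |f i x - f i y|
          ≤ ∑ i ∈ Finset.range N, s ^ i * (κ * d ^ β) :=
            Finset.sum_le_sum (fun i _ => hHol' i)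
        _ = (∑ i ∈ Finset.range N, s ^ i) * (κ * d ^ β) := by rw [Finset.sum_mul]
        _ = ((s ^ N - 1) / (s - 1)) * (κ * d ^ β) := by rw [geom_sum_eq (by linarith)]
        _ ≤ (s ^ N / (s - 1)) * (κ * d ^ β) := by
            apply mul_le_mul_of_nonneg_right _ (by positivity)
            apply div_le_div_of_nonneg_right _ (by linarith)
            linarith
        _ ≤ ((s * (d ^ α / d ^ β)) / (s - 1)) * (κ * d ^ β) := by
            apply mul_le_mul_of_nonneg_right _ (by positivity)
            exact div_le_div_of_nonneg_right hsN (by linarith)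
        _ = s/(s-1) * κ * (d ^ α / d ^ β * d ^ β) := by ring
        _ = s/(s-1) * κ * d ^ α := by
            rw [div_mul_cancel₀]
            positivity
    -- part 2
    have hrN : r ^ N ≤ d ^ α := by
      have : r ^ N = ((2:ℝ) ^ (-(N:ℝ))) ^ α := by
        rw [hr, ← Real.rpow_natCast ((2:ℝ) ^ (-α)) N, ← Real.rpow_mul (by norm_num),
          ← Real.rpow_mul (by norm_num)]
        ring_nf
      rw [this]
      exact Real.rpow_le_rpow h2N.le hNd hα.le
    have part2 : ∑' i, |f (i + N) x - f (i + N) y| ≤ 2/(1-r) * κ * d ^ α := by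
      have hsumtail : Summable (fun i : ℕ => 2 * (r ^ (i + N) * κ)) := by
        apply Summable.mul_left
        exact ((summable_geometric_of_lt_one hr0.le hr1).mul_right κ).comp_injective
          (add_left_injective N)
      calc ∑' i, |f (i + N) x - f (i + N) y| ≤ ∑' i, 2 * (r ^ (i + N) * κ) := by
            apply Summable.tsum_le_tsum (fun i => hSup' (i + N)) (habs.comp_injective (add_left_injective N)) hsumtail
        _ = 2 * κ * r ^ N * (1 - r)⁻¹ := tailsum N
        _ ≤ 2 * κ * d ^ α * (1 - r)⁻¹ := by
            apply mul_le_mul_of_nonneg_right _ (inv_nonneg.mpr (by linarith))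
            apply mul_le_mul_of_nonneg_left hrN (by positivity)
        _ = 2/(1-r) * κ * d ^ α := by
            rw [div_eq_mul_inv]; ring
    calc |(∑' n, f n x) - (∑' n, f n y)| ≤ ∑' n, |f n x - f n y| := step1
      _ = _ := split
      _ ≤ s/(s-1) * κ * d ^ α + 2/(1-r) * κ * d ^ α := add_le_add part1 part2
      _ = (s/(s-1) + 2/(1-r)) * κ * d ^ α := by ring
  · -- case d ≥ 1
    have hdα1 : (1:ℝ) ≤ d ^ α := Real.one_le_rpow hd1 hα.le
    have hsumtail : Summable (fun n : ℕ => 2 * (r ^ n * κ)) := hsum.mul_left 2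
    calc |(∑' n, f n x) - (∑' n, f n y)| ≤ ∑' n, |f n x - f n y| := step1
      _ ≤ ∑' n, 2 * (r ^ n * κ) := Summable.tsum_le_tsum hSup' habs hsumtail
      _ = 2 * κ * r ^ 0 * (1 - r)⁻¹ := by simpa using tailsum 0
      _ = 2/(1-r) * κ * 1 := by rw [div_eq_mul_inv]; ring
      _ ≤ 2/(1-r) * κ * d ^ α := by
          apply mul_le_mul_of_nonneg_left hdα1
            (mul_nonneg (div_nonneg (by norm_num) (by linarith)) hκ)
      _ ≤ (s/(s-1) + 2/(1-r)) * κ * d ^ α := by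
          apply mul_le_mul_of_nonneg_right _ hdα.le
          apply mul_le_mul_of_nonneg_right _ hκ
          have : 0 < s/(s-1) := div_pos (by linarith) (by linarith)
          linarith
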